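/- arXiv:1412.5721 — 3 statements merged into one kernel-verified Lean document; each statement's English description precedes it below -/
import Mathlib

section
/- Let C be the (random) final set of centers produced by the semi-online k-means algorithm run on input v_1,…,v_n with parameters k and w*, and let W* denote the optimal k-means cost of v_1,…,v_n with k clusters. If 0 < w* ≤ W*, then there is a universal constant c₀ (independent of n, k, d, the input vectors, and w*) such that the expected number of centers satisfies E[|C|] ≤ c₀ · k · (1 + log₂ n) · (1 + log₂(W*/w*)). -/
open scoped ENNReal

/-- Points of `ℝ^d`. -/
abbrev Pt (d : ℕ) := EuclideanSpace ℝ (Fin d)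

/-- `D²(v, C)`: squared Euclidean distance from `v` to the nearest center in the
list `C` (its value on the empty list is irrelevant: the algorithm opens a cluster
with probability 1 when `C` is empty). -/
noncomputable def D2 {d : ℕ} (v : Pt d) (C : List (Pt d)) : ℝ :=
  sInf {x | ∃ c ∈ C, x = ‖v - c‖ ^ 2}

/-- State of the semi-online `k`-means algorithm: current centers `C`, per-phase
counter `q`, current facility cost `f`, and accumulated online service cost `cost`. -/
structure SemiState (d : ℕ) where
  C : List (Pt d)
  q : ℕ
  f : ℝ
  cost : ℝ

/-- Probability of opening a new cluster at `v`: `min(D²(v,C)/f, 1)`, which is `1`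
when `C` is empty (`D(v,∅) = ∞`). -/
noncomputable def openProb {d : ℕ} (v : Pt d) (C : List (Pt d)) (f : ℝ) : ℝ≥0∞ :=
  match C with
  | [] => 1
  | _ :: _ => ENNReal.ofReal (min (D2 v C / f) 1)

lemma openProb_le_one {d : ℕ} (v : Pt d) (C : List (Pt d)) (f : ℝ) :
    openProb v C f ≤ 1 := by
  cases C with
  | nil => exact le_rfl
  | cons a l => exact ENNReal.ofReal_le_one.mpr (min_le_right _ _)

/-- One step of the semi-online algorithm on point `v`, with phase threshold `Q`
(`= 3k(1+log₂ n)`): with probability `min(D²(v,C)/f, 1)` the point `v` is added as a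
new center and the counter `q` incremented (starting a new phase, resetting `q` and
doubling `f`, if the threshold is reached); otherwise `v` is served by its nearest
current center, incurring cost `D²(v,C)`. -/
noncomputable def semiStep {d : ℕ} (Q : ℝ) (v : Pt d) (s : SemiState d) :
    PMF (SemiState d) :=
  (PMF.bernoulli (openProb v s.C s.f).toNNReal
      (by simpa using ENNReal.toNNReal_mono ENNReal.one_ne_top (openProb_le_one v s.C s.f))).bind fun b =>
    PMF.pure <|
      if b then
        if Q ≤ (s.q : ℝ) + 1 then
          { C := s.C ++ [v], q := 0, f := 2 * s.f, cost := s.cost }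
        else
          { C := s.C ++ [v], q := s.q + 1, f := s.f, cost := s.cost }
      else
        { s with cost := s.cost + D2 v s.C }

/-- The distribution over final states of the semi-online `k`-means algorithm on the
stream `vs`, with parameters `k`, `n`, `w*`: initial facility cost `w*/(k·log₂ n)`
and phase threshold `3k(1+log₂ n)`. -/
noncomputable def semiRun {d : ℕ} (k n : ℕ) (wstar : ℝ) (vs : List (Pt d)) :
    PMF (SemiState d) :=
  vs.foldlM (fun s v => semiStep (3 * (k : ℝ) * (1 + Real.logb 2 n)) v s)
    { C := [], q := 0, f := wstar / ((k : ℝ) * Real.logb 2 n), cost := 0 }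

/-- Expected number of centers of a (random) final state. -/
noncomputable def expectedCenters {d : ℕ} (μ : PMF (SemiState d)) : ℝ≥0∞ :=
  ∑' s, μ s * (s.C.length : ℝ≥0∞)

/-- The optimal `k`-means cost `W*` of the points `v 0, …, v (n-1)`: the infimum, over
assignments `σ` of the points into `k` clusters and centers `c`, of the total squared
distance of each point to the center of its cluster. -/
noncomputable def kMeansOpt {d : ℕ} (k : ℕ) {n : ℕ} (v : Fin n → Pt d) : ℝ :=
  sInf {w | ∃ (σ : Fin n → Fin k) (c : Fin k → Pt d),
    w = ∑ t, ‖v t - c (σ t)‖ ^ 2}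


-- ## Auxiliary machinery

noncomputable def Epmf {α : Type*} (μ : PMF α) (g : α → ℝ≥0∞) : ℝ≥0∞ := ∑' s, μ s * g s

lemma Epmf_bind {α β : Type*} (μ : PMF α) (κ : α → PMF β) (g : β → ℝ≥0∞) :
    Epmf (μ.bind κ) g = ∑' a, μ a * Epmf (κ a) g := by
  unfold Epmf
  simp only [PMF.bind_apply]
  have : ∀ s : β, (∑' a, μ a * (κ a) s) * g s = ∑' a, μ a * ((κ a) s * g s) := by
    intro s
    rw [← ENNReal.tsum_mul_right]
    congr 1; ext a; ring
  simp only [this]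
  rw [ENNReal.tsum_comm]
  congr 1; ext a
  rw [ENNReal.tsum_mul_left]

lemma Epmf_pure {α : Type*} (a : α) (g : α → ℝ≥0∞) : Epmf (PMF.pure a) g = g a := by
  unfold Epmf
  rw [tsum_eq_single a]
  · simp
  · intro b hb; simp [PMF.pure_apply, hb]

lemma Epmf_const {α : Type*} (μ : PMF α) (x : ℝ≥0∞) : Epmf μ (fun _ => x) = x := by
  unfold Epmf
  rw [ENNReal.tsum_mul_right, μ.tsum_coe, one_mul]

lemma Epmf_mono {α : Type*} (μ : PMF α) {g h : α → ℝ≥0∞} (hg : ∀ a, g a ≤ h a) :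
    Epmf μ g ≤ Epmf μ h :=
  ENNReal.tsum_le_tsum fun a => mul_le_mul_right (hg a) _

lemma Epmf_add {α : Type*} (μ : PMF α) (g h : α → ℝ≥0∞) :
    Epmf μ (fun a => g a + h a) = Epmf μ g + Epmf μ h := by
  unfold Epmf
  rw [← ENNReal.tsum_add]
  congr 1; ext a; rw [mul_add]

lemma Epmf_bernoulli_bind_pure {α : Type*} (p : ℝ≥0∞) (hp : p ≤ 1) (hp' : p.toNNReal ≤ 1)
    (h : Bool → α) (g : α → ℝ≥0∞) :
    Epmf ((PMF.bernoulli p.toNNReal hp').bind fun b => PMF.pure (h b)) g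
      = (1 - p) * g (h false) + p * g (h true) := by
  have hne : p ≠ ⊤ := ne_top_of_le_ne_top ENNReal.one_ne_top hp
  rw [Epmf_bind, tsum_bool]
  simp [Epmf_pure, PMF.bernoulli_apply, ENNReal.coe_sub, ENNReal.coe_toNNReal hne]

lemma D2_le {d : ℕ} (v u : Pt d) (C : List (Pt d)) (hu : u ∈ C) :
    D2 v C ≤ ‖v - u‖ ^ 2 := by
  apply csInf_le
  · exact ⟨0, fun x ⟨c, _, hx⟩ => hx ▸ sq_nonneg _⟩
  · exact ⟨u, hu, rfl⟩

section Rings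
variable {d k : ℕ}

noncomputable def iOf (i₀ : Fin k) (c : Fin k → Pt d) (x : Pt d) : Fin k :=
  have : Nonempty (Fin k) := ⟨i₀⟩
  (Finite.exists_min fun i => ‖x - c i‖).choose

noncomputable def dOf (i₀ : Fin k) (c : Fin k → Pt d) (x : Pt d) : ℝ :=
  ‖x - c (iOf i₀ c x)‖ ^ 2

lemma dOf_nonneg (i₀ : Fin k) (c : Fin k → Pt d) (x : Pt d) : 0 ≤ dOf i₀ c x :=
  sq_nonneg _

lemma dOf_le (i₀ : Fin k) (c : Fin k → Pt d) (x : Pt d) (j : Fin k) :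
    dOf i₀ c x ≤ ‖x - c j‖ ^ 2 := by
  have : Nonempty (Fin k) := ⟨i₀⟩
  have h := (Finite.exists_min fun i => ‖x - c i‖).choose_spec j
  exact pow_le_pow_left₀ (norm_nonneg _) h 2


noncomputable def jOf (i₀ : Fin k) (c : Fin k → Pt d) (W : ℝ) (L : ℕ) (x : Pt d) : ℕ :=
  if dOf i₀ c x ≤ W / 2 ^ (L + 1) then L + 1
  else ⌊Real.logb 2 (W / dOf i₀ c x)⌋₊

lemma jOf_spec (i₀ : Fin k) (c : Fin k → Pt d) {W : ℝ} (L : ℕ) {x : Pt d}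
    (hW : 0 < W) (hx : dOf i₀ c x ≤ W) (h : ¬ dOf i₀ c x ≤ W / 2 ^ (L + 1)) :
    dOf i₀ c x ≤ W / 2 ^ (jOf i₀ c W L x) ∧
    W / 2 ^ (jOf i₀ c W L x + 1) < dOf i₀ c x ∧ jOf i₀ c W L x ≤ L := by
  push_neg at h
  have hd0 : 0 < dOf i₀ c x := lt_trans (by positivity) h
  have hrat : 0 < W / dOf i₀ c x := by positivity
  have hj : jOf i₀ c W L x = ⌊Real.logb 2 (W / dOf i₀ c x)⌋₊ := by
    unfold jOf; rw [if_neg (not_le.2 h)]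
  have hlog0 : (0:ℝ) ≤ Real.logb 2 (W / dOf i₀ c x) := by
    apply Real.logb_nonneg (by norm_num)
    rw [le_div_iff₀ hd0, one_mul]; exact hx
  have hle : (jOf i₀ c W L x : ℝ) ≤ Real.logb 2 (W / dOf i₀ c x) := by
    rw [hj]; exact Nat.floor_le hlog0
  have hlt : Real.logb 2 (W / dOf i₀ c x) < (jOf i₀ c W L x : ℝ) + 1 := by
    rw [hj]; exact Nat.lt_floor_add_one _
  have h1 : (2:ℝ) ^ (jOf i₀ c W L x) ≤ W / dOf i₀ c x := by
    have := (Real.le_logb_iff_rpow_le (b := 2) (by norm_num) hrat).1 hle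
    rwa [Real.rpow_natCast] at this
  have h2 : W / dOf i₀ c x < (2:ℝ) ^ (jOf i₀ c W L x + 1) := by
    have := (Real.logb_lt_iff_lt_rpow (b := 2) (by norm_num) hrat).1 hlt
    rwa [show ((jOf i₀ c W L x : ℝ) + 1) = ((jOf i₀ c W L x + 1 : ℕ) : ℝ) by push_cast; ring,
      Real.rpow_natCast] at this
  refine ⟨?_, ?_, ?_⟩
  · rw [le_div_iff₀ (by positivity : (0:ℝ) < 2 ^ jOf i₀ c W L x)]
    rw [le_div_iff₀ hd0] at h1
    linarith [mul_comm (dOf i₀ c x) ((2:ℝ) ^ jOf i₀ c W L x)]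
  · rw [div_lt_iff₀ (by positivity : (0:ℝ) < 2 ^ (jOf i₀ c W L x + 1))]
    rw [div_lt_iff₀ hd0] at h2
    linarith [mul_comm (dOf i₀ c x) ((2:ℝ) ^ (jOf i₀ c W L x + 1))]
  · by_contra hc
    push_neg at hc
    have : (2:ℝ) ^ (L + 1) ≤ 2 ^ (jOf i₀ c W L x) :=
      pow_le_pow_right₀ (by norm_num) hc
    have hWd : W / dOf i₀ c x < 2 ^ (L+1) := by
      rw [div_lt_iff₀ hd0]
      have := h  -- W / 2^(L+1) < dOf x
      rw [div_lt_iff₀ (by positivity : (0:ℝ) < 2^(L+1))] at this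
      linarith [mul_comm (dOf i₀ c x) ((2:ℝ) ^ (L+1))]
    linarith

lemma jOf_le (i₀ : Fin k) (c : Fin k → Pt d) {W : ℝ} (L : ℕ) {x : Pt d}
    (hW : 0 < W) (hx : dOf i₀ c x ≤ W) : jOf i₀ c W L x ≤ L + 1 := by
  by_cases h : dOf i₀ c x ≤ W / 2 ^ (L + 1)
  · unfold jOf; rw [if_pos h]
  · exact le_trans (jOf_spec i₀ c L hW hx h).2.2 (Nat.le_succ L)

lemma ring_dOf_le (i₀ : Fin k) (c : Fin k → Pt d) {W : ℝ} (L : ℕ) {u x : Pt d}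
    (hW : 0 < W) (hu : dOf i₀ c u ≤ W) (hx : dOf i₀ c x ≤ W)
    (hj : jOf i₀ c W L u = jOf i₀ c W L x) :
    dOf i₀ c u ≤ 2 * dOf i₀ c x + 2 * (W / 2 ^ (L + 1)) := by
  have hWL : (0:ℝ) ≤ W / 2 ^ (L+1) := by positivity
  by_cases hsu : dOf i₀ c u ≤ W / 2 ^ (L + 1)
  · nlinarith [dOf_nonneg i₀ c x]
  · obtain ⟨hu1, hu2, hu3⟩ := jOf_spec i₀ c L hW hu hsu
    by_cases hsx : dOf i₀ c x ≤ W / 2 ^ (L + 1)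
    · exfalso
      have : jOf i₀ c W L x = L + 1 := by unfold jOf; rw [if_pos hsx]
      rw [this] at hj; omega
    · obtain ⟨hx1, hx2, hx3⟩ := jOf_spec i₀ c L hW hx hsx
      rw [hj] at hu1
      have : W / 2 ^ (jOf i₀ c W L x) = 2 * (W / 2 ^ (jOf i₀ c W L x + 1)) := by
        rw [pow_succ]; field_simp
      nlinarith

lemma sameRing_norm_le (i₀ : Fin k) (c : Fin k → Pt d) {W : ℝ} (L : ℕ) {u x : Pt d}
    (hW : 0 < W) (hu : dOf i₀ c u ≤ W) (hx : dOf i₀ c x ≤ W)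
    (hi : iOf i₀ c u = iOf i₀ c x) (hj : jOf i₀ c W L u = jOf i₀ c W L x) :
    ‖x - u‖ ^ 2 ≤ 6 * dOf i₀ c x + 4 * (W / 2 ^ (L + 1)) := by
  have hdu := ring_dOf_le i₀ c L hW hu hx hj
  have htri : ‖x - u‖ ≤ ‖x - c (iOf i₀ c x)‖ + ‖u - c (iOf i₀ c x)‖ := by
    calc ‖x - u‖ ≤ ‖x - c (iOf i₀ c x)‖ + ‖c (iOf i₀ c x) - u‖ :=
          norm_sub_le_norm_sub_add_norm_sub _ _ _
    _ = ‖x - c (iOf i₀ c x)‖ + ‖u - c (iOf i₀ c x)‖ := by rw [norm_sub_rev (c _) u]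
  have hsq : ‖x - u‖ ^ 2 ≤ 2 * ‖x - c (iOf i₀ c x)‖ ^ 2 + 2 * ‖u - c (iOf i₀ c x)‖ ^ 2 := by
    nlinarith [norm_nonneg (x - u), norm_nonneg (x - c (iOf i₀ c x)),
      norm_nonneg (u - c (iOf i₀ c x)),
      sq_nonneg (‖x - c (iOf i₀ c x)‖ - ‖u - c (iOf i₀ c x)‖)]
  have h1 : ‖x - c (iOf i₀ c x)‖ ^ 2 = dOf i₀ c x := rfl
  have h2 : ‖u - c (iOf i₀ c x)‖ ^ 2 = dOf i₀ c u := by rw [← hi]; rfl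
  rw [h1, h2] at hsq
  linarith

end Rings

section Alg
variable {d k : ℕ}

open Classical in
noncomputable def missX (ring : Pt d → Fin k × ℕ) (L : ℕ) (C : List (Pt d)) : ℕ :=
  (((Finset.univ : Finset (Fin k)) ×ˢ Finset.range (L + 2)).filter
    (fun ij => ¬ ∃ u ∈ C, ring u = ij)).card

lemma missX_le (ring : Pt d → Fin k × ℕ) (L : ℕ) (C : List (Pt d)) (x : Pt d) :
    missX ring L (C ++ [x]) ≤ missX ring L C := by
  classical
  apply Finset.card_le_card
  intro ij hm
  rw [Finset.mem_filter] at *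
  refine ⟨hm.1, fun h => hm.2 ?_⟩
  exact ⟨h.choose, ⟨List.mem_append_left _ h.choose_spec.1, h.choose_spec.2⟩⟩

lemma missX_lt (ring : Pt d → Fin k × ℕ) (L : ℕ) (C : List (Pt d)) (x : Pt d)
    (hin : (ring x).2 < L + 2) (hmiss : ¬ ∃ u ∈ C, ring u = ring x) :
    missX ring L (C ++ [x]) + 1 ≤ missX ring L C := by
  classical
  have hsub : (((Finset.univ : Finset (Fin k)) ×ˢ Finset.range (L + 2)).filter
      (fun ij => ¬ ∃ u ∈ C ++ [x], ring u = ij)) ⊂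
      (((Finset.univ : Finset (Fin k)) ×ˢ Finset.range (L + 2)).filter
      (fun ij => ¬ ∃ u ∈ C, ring u = ij)) := by
    constructor
    · intro ij hm
      rw [Finset.mem_filter] at *
      refine ⟨hm.1, fun h => hm.2 ?_⟩
      exact ⟨h.choose, ⟨List.mem_append_left _ h.choose_spec.1, h.choose_spec.2⟩⟩
    · intro hsup
      have h1 : ring x ∈ (((Finset.univ : Finset (Fin k)) ×ˢ Finset.range (L + 2)).filter
          (fun ij => ¬ ∃ u ∈ C, ring u = ij)) := by
        refine Finset.mem_filter.2 ⟨?_, hmiss⟩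
        exact Finset.mem_product.2 ⟨Finset.mem_univ _, Finset.mem_range.2 hin⟩
      have h2 := hsup h1
      have := (Finset.mem_filter.1 h2).2
      exact this ⟨x, List.mem_append_right _ (List.mem_singleton_self x), rfl⟩
  have := Finset.card_lt_card hsub
  unfold missX
  omega

open Classical in
noncomputable def Af (f₁ : ℝ) (r₁ : ℕ) (f : ℝ) : ℕ :=
  ((Finset.range r₁).filter (fun i => f ≤ f₁ * 2 ^ i)).card

lemma Af_pow {f₁ : ℝ} (hf₁ : 0 < f₁) (r₁ e : ℕ) : Af f₁ r₁ (f₁ * 2 ^ e) = r₁ - e := by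
  classical
  unfold Af
  have : ∀ i : ℕ, (f₁ * 2 ^ e ≤ f₁ * 2 ^ i) ↔ e ≤ i := by
    intro i
    rw [mul_le_mul_iff_right₀ hf₁]
    exact pow_le_pow_iff_right₀ (by norm_num)
  have heq : ((Finset.range r₁).filter (fun i => f₁ * 2 ^ e ≤ f₁ * 2 ^ i))
      = Finset.Ico e r₁ := by
    ext i
    simp [Finset.mem_filter, Finset.mem_range, Finset.mem_Ico, this i]
    omega
  rw [heq, Nat.card_Ico]

lemma Af_zero_of_le {f₁ f g : ℝ} (r₁ : ℕ) (hfg : f ≤ g) (hA : Af f₁ r₁ f = 0) :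
    Af f₁ r₁ g = 0 := by
  classical
  unfold Af at *
  rw [Finset.card_eq_zero] at *
  rw [Finset.filter_eq_empty_iff] at *
  intro i hi h
  exact hA hi (le_trans hfg h)

lemma Af_zero_ge {f₁ f : ℝ} {r₁ e : ℕ} (hf₁ : 0 < f₁) (hr₁ : 1 ≤ r₁)
    (hf : f = f₁ * 2 ^ e) (hA : Af f₁ r₁ f = 0) : f₁ * 2 ^ r₁ ≤ f := by
  classical
  unfold Af at hA
  rw [Finset.card_eq_zero, Finset.filter_eq_empty_iff] at hA
  have := hA (Finset.mem_range.2 (by omega : r₁ - 1 < r₁))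
  push_neg at this
  -- f₁ * 2^(r₁-1) < f = f₁*2^e  ⇒ r₁ - 1 < e ⇒ r₁ ≤ e
  have he : r₁ - 1 < e := by
    by_contra hc
    push_neg at hc
    have : f₁ * 2 ^ e ≤ f₁ * 2 ^ (r₁ - 1) := by
      rw [mul_le_mul_iff_right₀ hf₁]
      exact pow_le_pow_right₀ (by norm_num) hc
    rw [← hf] at this
    linarith
  rw [hf, mul_le_mul_iff_right₀ hf₁]
  exact pow_le_pow_right₀ (by norm_num) (by omega)

end Alg

section StepLemma
variable {d k : ℕ}

lemma arith1 (len m m' q a QC : ℕ) (hm : m' ≤ m) (hq : q + 1 ≤ QC) (ha : 1 ≤ a) :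
    len + 1 + m' + (QC * (a - 1) - 0) ≤ len + m + (QC * a - q) := by
  obtain ⟨a', rfl⟩ : ∃ a', a = a' + 1 := ⟨a - 1, by omega⟩
  simp only [Nat.add_sub_cancel, Nat.mul_succ]
  generalize QC * a' = b
  omega

lemma arith2 (len m m' q b : ℕ) (hm : m' ≤ m) (hq : q + 1 ≤ b) :
    len + 1 + m' + (b - (q + 1)) ≤ len + m + (b - q) := by omega

lemma glue_A {p G GT pay : ℝ≥0∞} (hp : p ≤ 1) (hGT : GT ≤ G) :
    (1 - p) * G + p * GT ≤ G + pay := by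
  calc (1 - p) * G + p * GT ≤ (1 - p) * G + p * G := by
        exact add_le_add_right (mul_le_mul_right hGT p) _
  _ = ((1 - p) + p) * G := by rw [add_mul]
  _ = G := by rw [tsub_add_cancel_of_le hp, one_mul]
  _ ≤ G + pay := le_self_add

lemma glue_B {p G GT pay : ℝ≥0∞} (hp : p ≤ 1) (hGT : GT ≤ G + 1) (hpp : p ≤ pay) :
    (1 - p) * G + p * GT ≤ G + pay := by
  calc (1 - p) * G + p * GT ≤ (1 - p) * G + p * (G + 1) := by
        exact add_le_add_right (mul_le_mul_right hGT p) _
  _ = ((1 - p) + p) * G + p := by rw [mul_add, mul_one, add_mul]; ring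
  _ = G + p := by rw [tsub_add_cancel_of_le hp, one_mul]
  _ ≤ G + pay := add_le_add_right hpp _

lemma openProb_le_div {v : Pt d} {C : List (Pt d)} (hC : C ≠ []) (f : ℝ) :
    openProb v C f ≤ ENNReal.ofReal (D2 v C / f) := by
  cases C with
  | nil => exact absurd rfl hC
  | cons a l => exact ENNReal.ofReal_le_ofReal (min_le_left _ _)

noncomputable def ringOf (i₀ : Fin k) (c : Fin k → Pt d) (W : ℝ) (L : ℕ) (x : Pt d) :
    Fin k × ℕ := (iOf i₀ c x, jOf i₀ c W L x)

noncomputable def Gn (i₀ : Fin k) (c : Fin k → Pt d) (W : ℝ) (L QC : ℕ) (f₁ : ℝ)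
    (r₁ : ℕ) (s : SemiState d) : ℕ :=
  s.C.length + missX (ringOf i₀ c W L) L s.C + (QC * Af f₁ r₁ s.f - s.q)

def InvS (i₀ : Fin k) (c : Fin k → Pt d) (W f₁ : ℝ) (QC : ℕ) (s : SemiState d) : Prop :=
  (∃ e : ℕ, s.f = f₁ * 2 ^ e) ∧ s.q + 1 ≤ QC ∧ ∀ u ∈ s.C, dOf i₀ c u ≤ W

noncomputable def payX (i₀ : Fin k) (c : Fin k → Pt d) (W : ℝ) (L : ℕ) (f₁ : ℝ)
    (r₁ : ℕ) (x : Pt d) : ℝ≥0∞ :=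
  ENNReal.ofReal ((6 * dOf i₀ c x + 4 * (W / 2 ^ (L + 1))) / (f₁ * 2 ^ r₁))

lemma semiStep_cases (Q : ℝ) (x : Pt d) (s t : SemiState d)
    (ht : t ∈ (semiStep Q x s).support) :
    t = { s with cost := s.cost + D2 x s.C } ∨
    (Q ≤ (s.q : ℝ) + 1 ∧ t = ⟨s.C ++ [x], 0, 2 * s.f, s.cost⟩) ∨
    (¬ (Q ≤ (s.q : ℝ) + 1) ∧ t = ⟨s.C ++ [x], s.q + 1, s.f, s.cost⟩) := by
  unfold semiStep at ht
  rw [PMF.support_bind] at ht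
  obtain ⟨b, _, htb⟩ := Set.mem_iUnion₂.1 ht
  rw [PMF.support_pure, Set.mem_singleton_iff] at htb
  subst htb
  cases b with
  | false => left; rfl
  | true =>
    right
    by_cases hsw : Q ≤ (s.q : ℝ) + 1
    · left; exact ⟨hsw, by simp [hsw]⟩
    · right; exact ⟨hsw, by simp [hsw]⟩

lemma semiStep_inv (i₀ : Fin k) (c : Fin k → Pt d) {W f₁ : ℝ} {QC : ℕ} {Q : ℝ}
    (hQC : 1 ≤ QC) (hQ : Q ≤ (QC : ℝ)) {x : Pt d} (hx : dOf i₀ c x ≤ W)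
    {s t : SemiState d} (hs : InvS i₀ c W f₁ QC s)
    (ht : t ∈ (semiStep Q x s).support) : InvS i₀ c W f₁ QC t := by
  obtain ⟨⟨e, hf⟩, hq, hC⟩ := hs
  rcases semiStep_cases Q x s t ht with h | ⟨hsw, h⟩ | ⟨hsw, h⟩ <;> subst h
  · exact ⟨⟨e, hf⟩, hq, hC⟩
  · refine ⟨⟨e + 1, by rw [hf, pow_succ]; ring⟩, by dsimp only; omega, ?_⟩
    intro u hu
    rcases List.mem_append.1 hu with hu | hu
    · exact hC u hu
    · rw [List.mem_singleton.1 hu]; exact hx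
  · refine ⟨⟨e, hf⟩, ?_, ?_⟩
    · have h1 : (s.q : ℝ) + 1 < (QC : ℝ) := lt_of_lt_of_le (not_le.1 hsw) hQ
      have h2 : s.q + 1 < QC := by exact_mod_cast h1
      dsimp only
      omega
    · intro u hu
      rcases List.mem_append.1 hu with hu | hu
      · exact hC u hu
      · rw [List.mem_singleton.1 hu]; exact hx

lemma step_G (i₀ : Fin k) (c : Fin k → Pt d) {W f₁ : ℝ} {L QC r₁ : ℕ} {Q : ℝ}
    (hW : 0 < W) (hf₁ : 0 < f₁) (hQC : 1 ≤ QC) (hr₁ : 1 ≤ r₁)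
    {x : Pt d} (hx : dOf i₀ c x ≤ W) {s : SemiState d}
    (hs : InvS i₀ c W f₁ QC s) :
    Epmf (semiStep Q x s) (fun t => (Gn i₀ c W L QC f₁ r₁ t : ℝ≥0∞))
      ≤ (Gn i₀ c W L QC f₁ r₁ s : ℝ≥0∞) + payX i₀ c W L f₁ r₁ x := by
  obtain ⟨⟨e, hf⟩, hq, hC⟩ := hs
  have hfpos : 0 < s.f := by rw [hf]; positivity
  unfold semiStep
  refine (Epmf_bernoulli_bind_pure _ (openProb_le_one x s.C s.f) _ _ _).trans_le ?_
  simp only [Bool.false_eq_true, if_false, if_true]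
  set p := openProb x s.C s.f with hp
  have hGF : Gn i₀ c W L QC f₁ r₁ { s with cost := s.cost + D2 x s.C }
      = Gn i₀ c W L QC f₁ r₁ s := rfl
  rw [hGF]
  have hlen : (s.C ++ [x]).length = s.C.length + 1 := by simp
  have hmono := missX_le (ringOf i₀ c W L) L s.C x
  by_cases hA : Af f₁ r₁ s.f = 0
  · -- low facility cost exhausted: either free (unhit ring) or paid
    by_cases hhit : ∃ u ∈ s.C, ringOf i₀ c W L u = ringOf i₀ c W L x
    · -- paid case
      apply glue_B (openProb_le_one _ _ _)
      · -- Gn sT ≤ Gn s + 1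
        have hA2 : Af f₁ r₁ (2 * s.f) = 0 :=
          Af_zero_of_le r₁ (by linarith) hA
        split
        · have hnat : Gn i₀ c W L QC f₁ r₁ ⟨s.C ++ [x], 0, 2 * s.f, s.cost⟩
              ≤ Gn i₀ c W L QC f₁ r₁ s + 1 := by
            unfold Gn; dsimp only
            simp only [hlen, hA, hA2, Nat.mul_zero, Nat.zero_sub]
            omega
          exact_mod_cast hnat
        · have hnat : Gn i₀ c W L QC f₁ r₁ ⟨s.C ++ [x], s.q + 1, s.f, s.cost⟩
              ≤ Gn i₀ c W L QC f₁ r₁ s + 1 := by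
            unfold Gn; dsimp only
            simp only [hlen, hA, Nat.mul_zero, Nat.zero_sub]
            omega
          exact_mod_cast hnat
      · -- p ≤ payX
        obtain ⟨u, huC, hur⟩ := hhit
        have hCne : s.C ≠ [] := by intro h; rw [h] at huC; exact absurd huC List.not_mem_nil
        refine le_trans (openProb_le_div hCne s.f) (ENNReal.ofReal_le_ofReal ?_)
        have hi : iOf i₀ c u = iOf i₀ c x := congrArg Prod.fst hur
        have hj : jOf i₀ c W L u = jOf i₀ c W L x := congrArg Prod.snd hur
        have hD2 : D2 x s.C ≤ 6 * dOf i₀ c x + 4 * (W / 2 ^ (L + 1)) :=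
          le_trans (D2_le x u s.C huC) (sameRing_norm_le i₀ c L hW (hC u huC) hx hi hj)
        have hflow : f₁ * 2 ^ r₁ ≤ s.f := Af_zero_ge hf₁ hr₁ hf hA
        have hflowpos : (0 : ℝ) < f₁ * 2 ^ r₁ := by positivity
        have hnum : (0:ℝ) ≤ 6 * dOf i₀ c x + 4 * (W / 2 ^ (L + 1)) := by
          have := dOf_nonneg i₀ c x; positivity
        exact div_le_div₀ hnum hD2 hflowpos hflow
    · -- free case: ring of x unhit
      apply glue_A (openProb_le_one _ _ _)
      have hjx : (ringOf i₀ c W L x).2 < L + 2 := by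
        have := jOf_le i₀ c L hW hx
        simpa [ringOf] using by omega
      have hmlt := missX_lt (ringOf i₀ c W L) L s.C x hjx hhit
      have hA2 : Af f₁ r₁ (2 * s.f) = 0 := Af_zero_of_le r₁ (by linarith) hA
      split
      · have hnat : Gn i₀ c W L QC f₁ r₁ ⟨s.C ++ [x], 0, 2 * s.f, s.cost⟩
            ≤ Gn i₀ c W L QC f₁ r₁ s := by
          unfold Gn; dsimp only
          simp only [hlen, hA, hA2, Nat.mul_zero, Nat.zero_sub]
          omega
        exact_mod_cast hnat
      · have hnat : Gn i₀ c W L QC f₁ r₁ ⟨s.C ++ [x], s.q + 1, s.f, s.cost⟩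
            ≤ Gn i₀ c W L QC f₁ r₁ s := by
          unfold Gn; dsimp only
          simp only [hlen, hA, Nat.mul_zero, Nat.zero_sub]
          omega
        exact_mod_cast hnat
  · -- facility countdown active: φC pays for the open
    apply glue_A (openProb_le_one _ _ _)
    have hAe : Af f₁ r₁ s.f = r₁ - e := by rw [hf]; exact Af_pow hf₁ r₁ e
    have hA1 : 1 ≤ r₁ - e := by omega
    split
    · have hnat : Gn i₀ c W L QC f₁ r₁ ⟨s.C ++ [x], 0, 2 * s.f, s.cost⟩
          ≤ Gn i₀ c W L QC f₁ r₁ s := by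
        unfold Gn; dsimp only
        have hA2 : Af f₁ r₁ (2 * s.f) = r₁ - (e + 1) := by
          rw [hf, show 2 * (f₁ * 2 ^ e) = f₁ * 2 ^ (e + 1) by rw [pow_succ]; ring]
          exact Af_pow hf₁ r₁ (e + 1)
        simp only [hlen, hAe, hA2]
        have h3 : r₁ - (e + 1) = (r₁ - e) - 1 := by omega
        rw [h3]
        exact arith1 _ _ _ _ _ _ hmono hq hA1
      exact_mod_cast hnat
    · have hnat : Gn i₀ c W L QC f₁ r₁ ⟨s.C ++ [x], s.q + 1, s.f, s.cost⟩
          ≤ Gn i₀ c W L QC f₁ r₁ s := by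
        unfold Gn; dsimp only
        simp only [hlen, hAe]
        have hb : s.q + 1 ≤ QC * (r₁ - e) := le_trans hq (Nat.le_mul_of_pos_right QC (by omega))
        exact arith2 _ _ _ _ _ hmono hb
      exact_mod_cast hnat

end StepLemma

section RunLemma
variable {d k : ℕ}

lemma run_G (i₀ : Fin k) (c : Fin k → Pt d) {W f₁ : ℝ} (L : ℕ) {QC r₁ : ℕ} {Q : ℝ}
    (hW : 0 < W) (hf₁ : 0 < f₁) (hQC : 1 ≤ QC) (hQ : Q ≤ (QC : ℝ)) (hr₁ : 1 ≤ r₁)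
    (l : List (Pt d)) :
    (∀ x ∈ l, dOf i₀ c x ≤ W) → ∀ s : SemiState d, InvS i₀ c W f₁ QC s →
    Epmf (l.foldlM (fun s v => semiStep Q v s) s) (fun t => (t.C.length : ℝ≥0∞))
      ≤ (Gn i₀ c W L QC f₁ r₁ s : ℝ≥0∞) + (l.map (payX i₀ c W L f₁ r₁)).sum := by
  induction l with
  | nil =>
    intro _ s hs
    rw [List.foldlM_nil]
    have : Epmf (pure s : PMF (SemiState d)) (fun t => ((t.C.length : ℕ) : ℝ≥0∞))
        = s.C.length := Epmf_pure s _
    rw [this]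
    simp only [List.map_nil, List.sum_nil, add_zero]
    have hn : s.C.length ≤ Gn i₀ c W L QC f₁ r₁ s := by
      unfold Gn; omega
    exact_mod_cast hn
  | cons v l ih =>
    intro hl s hs
    have hv : dOf i₀ c v ≤ W := hl v List.mem_cons_self
    have hl' : ∀ x ∈ l, dOf i₀ c x ≤ W := fun x hx => hl x (List.mem_cons_of_mem v hx)
    rw [List.foldlM_cons]
    have hbind : Epmf ((semiStep Q v s) >>= fun s' => l.foldlM (fun s v => semiStep Q v s) s')
        (fun t => (t.C.length : ℝ≥0∞))
        = ∑' a, (semiStep Q v s) a *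
            Epmf (l.foldlM (fun s v => semiStep Q v s) a) (fun t => (t.C.length : ℝ≥0∞)) :=
      Epmf_bind _ _ _
    rw [hbind]
    set S : ℝ≥0∞ := (l.map (payX i₀ c W L f₁ r₁)).sum with hS
    calc ∑' a, (semiStep Q v s) a *
            Epmf (l.foldlM (fun s v => semiStep Q v s) a) (fun t => (t.C.length : ℝ≥0∞))
        ≤ ∑' a, (semiStep Q v s) a * ((Gn i₀ c W L QC f₁ r₁ a : ℝ≥0∞) + S) := by
          apply ENNReal.tsum_le_tsum
          intro a
          by_cases ha : (semiStep Q v s) a = 0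
          · rw [ha, zero_mul, zero_mul]
          · exact mul_le_mul_right
              (ih hl' a (semiStep_inv i₀ c hQC hQ hv hs (PMF.mem_support_iff _ a |>.2 ha))) _
    _ = Epmf (semiStep Q v s) (fun a => (Gn i₀ c W L QC f₁ r₁ a : ℝ≥0∞) + S) := rfl
    _ = Epmf (semiStep Q v s) (fun a => (Gn i₀ c W L QC f₁ r₁ a : ℝ≥0∞)) + S := by
          rw [Epmf_add]
          congr 1
          exact Epmf_const _ S
    _ ≤ ((Gn i₀ c W L QC f₁ r₁ s : ℝ≥0∞) + payX i₀ c W L f₁ r₁ v) + S :=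
          add_le_add_left (step_G i₀ c hW hf₁ hQC hr₁ hv hs) _
    _ = (Gn i₀ c W L QC f₁ r₁ s : ℝ≥0∞) + ((v :: l).map (payX i₀ c W L f₁ r₁)).sum := by
          rw [List.map_cons, List.sum_cons, add_assoc]

end RunLemma

set_option maxHeartbeats 2000000

/-- There is a universal constant `c₀` such that for every dimension `d`,
stream `v 0, …, v (n-1)` in `ℝ^d` with `n ≥ 2`, every `k ≥ 1` and every `w*` with
`0 < w* ≤ W*` (where `W*` is the optimal `k`-means cost of the stream), the expected
number of centers produced by the semi-online `k`-means algorithm is at most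
`c₀ · k · (1 + log₂ n) · (1 + log₂(W*/w*))`. -/
theorem semiOnline_expected_number_of_centers :
    ∃ c₀ : ℝ, 0 < c₀ ∧
      ∀ (d n k : ℕ) (v : Fin n → Pt d) (wstar : ℝ),
        2 ≤ n → 1 ≤ k → 0 < wstar → wstar ≤ kMeansOpt k v →
        expectedCenters (semiRun k n wstar (List.ofFn v)) ≤
          ENNReal.ofReal (c₀ * k * (1 + Real.logb 2 n) *
            (1 + Real.logb 2 (kMeansOpt k v / wstar))) := by
  refine ⟨100, by norm_num, ?_⟩
  intro d n k v wstar hn hk hw hwle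
  have hlb1 : 1 ≤ Real.logb 2 n := by
    have h2 : (2:ℝ) ≤ (n:ℝ) := by exact_mod_cast hn
    calc (1:ℝ) = Real.logb 2 2 := (Real.logb_self_eq_one (by norm_num)).symm
    _ ≤ Real.logb 2 n := Real.logb_le_logb_of_le (by norm_num) (by norm_num) h2
  set lb := Real.logb 2 n with hlb_def
  have hk1 : (1:ℝ) ≤ k := by exact_mod_cast hk
  have hkpos : (0:ℝ) < k := by linarith
  have hWopt_pos : 0 < kMeansOpt k v := lt_of_lt_of_le hw hwle
  have hi0 : 0 < k := hk
  -- choose a clustering of cost < 2 * OPT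
  have hSne : {w : ℝ | ∃ (σ : Fin n → Fin k) (c : Fin k → Pt d),
      w = ∑ t, ‖v t - c (σ t)‖ ^ 2}.Nonempty :=
    ⟨∑ t, ‖v t - (0:Pt d)‖ ^ 2, fun _ => ⟨0, hi0⟩, fun _ => 0, rfl⟩
  have hSbdd : BddBelow {w : ℝ | ∃ (σ : Fin n → Fin k) (c : Fin k → Pt d),
      w = ∑ t, ‖v t - c (σ t)‖ ^ 2} :=
    ⟨0, fun w ⟨σ', cc', hw'⟩ => hw' ▸ Finset.sum_nonneg fun _ _ => sq_nonneg _⟩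
  obtain ⟨Wc, hWcS, hWclt⟩ : ∃ w ∈ {w : ℝ | ∃ (σ : Fin n → Fin k) (c : Fin k → Pt d),
      w = ∑ t, ‖v t - c (σ t)‖ ^ 2}, w < 2 * kMeansOpt k v := by
    apply (csInf_lt_iff hSbdd hSne).1
    show kMeansOpt k v < 2 * kMeansOpt k v
    linarith
  obtain ⟨σ, cc, hWc⟩ := hWcS
  have hWge : kMeansOpt k v ≤ Wc := csInf_le hSbdd ⟨σ, cc, hWc⟩
  have hWcpos : 0 < Wc := lt_of_lt_of_le hWopt_pos hWge
  -- parameters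
  set i₀ : Fin k := ⟨0, hi0⟩ with hi₀_def
  set L : ℕ := ⌈lb⌉₊ with hL_def
  set Q : ℝ := 3 * (k:ℝ) * (1 + lb) with hQ_def
  set QC : ℕ := ⌈Q⌉₊ with hQC_def
  set f₁ : ℝ := wstar / ((k:ℝ) * lb) with hf₁_def
  set P : ℝ := Real.logb 2 (kMeansOpt k v / wstar) with hP_def
  set m : ℕ := ⌈Real.logb 2 (Wc / wstar)⌉₊ with hm_def
  set r₁ : ℕ := m + 3 with hr₁_def
  have hlbpos : 0 < lb := by linarith
  have hf₁pos : 0 < f₁ := div_pos hw (by positivity)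
  have hQpos : 0 < Q := by rw [hQ_def]; positivity
  have hQC1 : 1 ≤ QC := Nat.one_le_iff_ne_zero.2 (by
    have := Nat.ceil_pos.2 hQpos
    omega)
  have hQle : Q ≤ (QC:ℝ) := Nat.le_ceil Q
  have hr₁1 : 1 ≤ r₁ := by omega
  have hdle : ∀ x ∈ List.ofFn v, dOf i₀ cc x ≤ Wc := by
    intro x hx
    obtain ⟨t, ht⟩ := List.mem_ofFn.1 hx
    rw [← ht]
    calc dOf i₀ cc (v t) ≤ ‖v t - cc (σ t)‖ ^ 2 := dOf_le i₀ cc (v t) (σ t)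
    _ ≤ Wc := by
      rw [hWc]
      exact Finset.single_le_sum (f := fun t => ‖v t - cc (σ t)‖ ^ 2)
        (fun i _ => sq_nonneg _) (Finset.mem_univ t)
  have hInv0 : InvS i₀ cc Wc f₁ QC
      ⟨[], 0, wstar / ((k : ℝ) * Real.logb 2 n), 0⟩ := by
    refine ⟨⟨0, ?_⟩, by dsimp only; omega, by intro u hu; exact absurd hu List.not_mem_nil⟩
    show wstar / ((k : ℝ) * Real.logb 2 n) = f₁ * 2 ^ 0
    rw [pow_zero, mul_one]
  have hmain := run_G i₀ cc (W := Wc) (f₁ := f₁) L (QC := QC) (r₁ := r₁) (Q := Q)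
    hWcpos hf₁pos hQC1 hQle hr₁1 (List.ofFn v) hdle
    ⟨[], 0, wstar / ((k : ℝ) * Real.logb 2 n), 0⟩ hInv0
  have hrun : expectedCenters (semiRun k n wstar (List.ofFn v))
      = Epmf ((List.ofFn v).foldlM (fun s v => semiStep Q v s)
          ⟨[], 0, wstar / ((k : ℝ) * Real.logb 2 n), 0⟩)
        (fun t => (t.C.length : ℝ≥0∞)) := rfl
  rw [hrun]
  refine le_trans hmain ?_
  -- bound the two pieces
  have hGn : Gn i₀ cc Wc L QC f₁ r₁ ⟨[], 0, wstar / ((k : ℝ) * Real.logb 2 n), 0⟩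
      ≤ k * (L + 2) + QC * r₁ := by
    unfold Gn
    dsimp only
    have h1 : missX (ringOf i₀ cc Wc L) L ([] : List (Pt d)) ≤ k * (L + 2) := by
      unfold missX
      calc _ ≤ ((Finset.univ : Finset (Fin k)) ×ˢ Finset.range (L + 2)).card :=
            Finset.card_filter_le _ _
      _ = k * (L + 2) := by
            rw [Finset.card_product, Finset.card_univ, Fintype.card_fin, Finset.card_range]
    have h2 : Af f₁ r₁ (wstar / ((k : ℝ) * Real.logb 2 n)) ≤ r₁ := by
      unfold Af
      calc _ ≤ (Finset.range r₁).card := Finset.card_filter_le _ _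
      _ = r₁ := Finset.card_range r₁
    have h3 : QC * Af f₁ r₁ (wstar / ((k : ℝ) * Real.logb 2 n)) ≤ QC * r₁ :=
      Nat.mul_le_mul_left QC h2
    simp only [List.length_nil]
    omega
  have hflowpos : (0:ℝ) < f₁ * 2 ^ r₁ := by positivity
  have h2m : Wc / wstar ≤ (2:ℝ) ^ m := by
    have h0 : (0:ℝ) < Wc / wstar := by positivity
    calc Wc / wstar = 2 ^ Real.logb 2 (Wc / wstar) :=
          (Real.rpow_logb (by norm_num) (by norm_num) h0).symm
    _ ≤ 2 ^ ((m:ℕ):ℝ) := Real.rpow_le_rpow_of_exponent_le (by norm_num) (Nat.le_ceil _)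
    _ = 2 ^ m := Real.rpow_natCast 2 m
  have h2L : (n:ℝ) ≤ (2:ℝ) ^ L := by
    have h0 : (0:ℝ) < n := by positivity
    calc (n:ℝ) = 2 ^ Real.logb 2 n := (Real.rpow_logb (by norm_num) (by norm_num) h0).symm
    _ ≤ 2 ^ ((L:ℕ):ℝ) := Real.rpow_le_rpow_of_exponent_le (by norm_num) (Nat.le_ceil _)
    _ = 2 ^ L := Real.rpow_natCast 2 L
  have hpay : ((List.ofFn v).map (payX i₀ cc Wc L f₁ r₁)).sum
      ≤ ENNReal.ofReal ((k:ℝ) * lb) := by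
    rw [List.map_ofFn, List.sum_ofFn]
    have : ∀ t : Fin n, (payX i₀ cc Wc L f₁ r₁ ∘ v) t =
        ENNReal.ofReal ((6 * dOf i₀ cc (v t) + 4 * (Wc / 2 ^ (L + 1))) / (f₁ * 2 ^ r₁)) :=
      fun t => rfl
    simp only [this]
    rw [← ENNReal.ofReal_sum_of_nonneg (fun t _ => by
      have := dOf_nonneg i₀ cc (v t); positivity)]
    apply ENNReal.ofReal_le_ofReal
    rw [← Finset.sum_div, div_le_iff₀ hflowpos]
    have hsum1 : ∑ t : Fin n, dOf i₀ cc (v t) ≤ Wc := by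
      rw [hWc]
      exact Finset.sum_le_sum fun t _ => dOf_le i₀ cc (v t) (σ t)
    have hsum : ∑ t : Fin n, (6 * dOf i₀ cc (v t) + 4 * (Wc / 2 ^ (L + 1)))
        ≤ 6 * Wc + (n:ℝ) * (4 * (Wc / 2 ^ (L + 1))) := by
      rw [Finset.sum_add_distrib, ← Finset.mul_sum]
      simp only [Finset.sum_const, Finset.card_univ, Fintype.card_fin, nsmul_eq_mul]
      linarith
    have hsmall : (n:ℝ) * (4 * (Wc / 2 ^ (L + 1))) ≤ 2 * Wc := by
      have h2Lpos : (0:ℝ) < 2 ^ L := by positivity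
      rw [pow_succ]
      rw [show (n:ℝ) * (4 * (Wc / (2 ^ L * 2))) = 2 * ((n:ℝ) / 2 ^ L) * Wc by ring]
      have : (n:ℝ) / 2 ^ L ≤ 1 := by
        rw [div_le_one h2Lpos]; exact h2L
      nlinarith
    -- flow lower bound : k * lb * (f₁ * 2^r₁) ≥ 8 * Wc
    have hflow : 8 * Wc ≤ (k:ℝ) * lb * (f₁ * 2 ^ r₁) := by
      have h1 : (k:ℝ) * lb * f₁ = wstar := by
        rw [hf₁_def]; field_simp
      have h2 : (2:ℝ) ^ r₁ = 8 * 2 ^ m := by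
        rw [hr₁_def, pow_add]; norm_num; ring
      calc 8 * Wc = 8 * (wstar * (Wc / wstar)) := by field_simp
      _ ≤ 8 * (wstar * 2 ^ m) := by
            have := mul_le_mul_of_nonneg_left h2m (le_of_lt hw)
            nlinarith
      _ = (k:ℝ) * lb * (f₁ * 2 ^ r₁) := by rw [← h1, h2]; ring
    linarith
  -- combine
  calc (Gn i₀ cc Wc L QC f₁ r₁ ⟨[], 0, wstar / ((k : ℝ) * Real.logb 2 n), 0⟩ : ℝ≥0∞)
        + ((List.ofFn v).map (payX i₀ cc Wc L f₁ r₁)).sum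
      ≤ ((k * (L + 2) + QC * r₁ : ℕ) : ℝ≥0∞) + ENNReal.ofReal ((k:ℝ) * lb) := by
        exact add_le_add (by exact_mod_cast hGn) hpay
  _ = ENNReal.ofReal ((k * (L + 2) + QC * r₁ : ℕ) : ℝ) + ENNReal.ofReal ((k:ℝ) * lb) := by
        rw [ENNReal.ofReal_natCast]
  _ ≤ ENNReal.ofReal (100 * (k:ℝ) * (1 + lb) * (1 + P)) := by
        rw [← ENNReal.ofReal_add (by positivity) (by positivity)]
        apply ENNReal.ofReal_le_ofReal
        -- final real arithmetic
        have hP0 : 0 ≤ P := Real.logb_nonneg (by norm_num) ((one_le_div hw).2 hwle)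
        have hLle : (L:ℝ) ≤ lb + 1 := by
          have := Nat.ceil_lt_add_one (le_of_lt hlbpos)
          exact le_of_lt this
        have hQCle : (QC:ℝ) ≤ Q + 1 := le_of_lt (Nat.ceil_lt_add_one (le_of_lt hQpos))
        have hmle : (m:ℝ) ≤ P + 2 := by
          have h1 : Real.logb 2 (Wc / wstar) ≤ P + 1 := by
            have hlt : Wc / wstar ≤ 2 * (kMeansOpt k v / wstar) := by
              rw [div_le_iff₀ hw]
              calc Wc ≤ 2 * kMeansOpt k v := le_of_lt hWclt
              _ = 2 * (kMeansOpt k v / wstar) * wstar := by field_simp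
            calc Real.logb 2 (Wc / wstar) ≤ Real.logb 2 (2 * (kMeansOpt k v / wstar)) :=
                  Real.logb_le_logb_of_le (by norm_num) (by positivity) hlt
            _ = 1 + P := by
                  rw [Real.logb_mul (by norm_num) (by positivity),
                    Real.logb_self_eq_one (by norm_num)]
            _ = P + 1 := by ring
          have := Nat.ceil_lt_add_one (Real.logb_nonneg (b := 2) (by norm_num)
            ((one_le_div hw).2 (le_trans hwle hWge)))
          linarith
        have hK2 : (2:ℝ) ≤ (k:ℝ) * (1 + lb) := by nlinarith
        push_cast
        have hQC4 : (QC:ℝ) ≤ 4 * ((k:ℝ) * (1 + lb)) := by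
          rw [hQ_def] at hQCle; nlinarith
        have hr₁5 : ((m:ℝ) + 3) ≤ 5 * (1 + P) := by linarith
        have hA2 : (QC:ℝ) * ((m:ℝ) + 3) ≤ 20 * ((k:ℝ) * (1 + lb) * (1 + P)) := by
          calc (QC:ℝ) * ((m:ℝ) + 3) ≤ (4 * ((k:ℝ) * (1 + lb))) * (5 * (1 + P)) := by
                apply mul_le_mul hQC4 hr₁5 (by positivity) (by positivity)
          _ = 20 * ((k:ℝ) * (1 + lb) * (1 + P)) := by ring
        have hA1 : (k:ℝ) * ((L:ℝ) + 2) ≤ 3 * ((k:ℝ) * (1 + lb) * (1 + P)) := by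
          have hb1 : (k:ℝ) * ((L:ℝ) + 2) ≤ (k:ℝ) * (lb + 3) :=
            mul_le_mul_of_nonneg_left (by linarith) (le_of_lt hkpos)
          have hb2 : (k:ℝ) * (lb + 3) ≤ 3 * ((k:ℝ) * (1 + lb)) := by nlinarith
          have hb3 : 3 * ((k:ℝ) * (1 + lb)) ≤ 3 * ((k:ℝ) * (1 + lb) * (1 + P)) := by
            have : (k:ℝ) * (1 + lb) ≤ (k:ℝ) * (1 + lb) * (1 + P) :=
              le_mul_of_one_le_right (by positivity) (by linarith)
            linarith
          linarith
        have hA3 : (k:ℝ) * lb ≤ (k:ℝ) * (1 + lb) * (1 + P) := by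
          have hb1 : (k:ℝ) * lb ≤ (k:ℝ) * (1 + lb) :=
            mul_le_mul_of_nonneg_left (by linarith) (le_of_lt hkpos)
          have hb2 : (k:ℝ) * (1 + lb) ≤ (k:ℝ) * (1 + lb) * (1 + P) :=
            le_mul_of_one_le_right (by positivity) (by linarith)
          linarith
        have hfin : 100 * (k:ℝ) * (1 + lb) * (1 + P) = 100 * ((k:ℝ) * (1 + lb) * (1 + P)) := by
          ring
        rw [hfin]
        have hpos : 0 ≤ (k:ℝ) * (1 + lb) * (1 + P) := by positivity
        have hr₁c : (r₁:ℝ) = (m:ℝ) + 3 := by rw [hr₁_def]; push_cast; ring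
        rw [hr₁c]
        linarith
end

section
/- Let X_1,…,X_n be independent Bernoulli random variables (experiments), where X_i succeeds with probability p_i, and suppose there are reals B > 0 and A_1,…,A_n ≥ 0 such that p_i ≥ min(A_i/B, 1) for every i. Let t be the random number of initial consecutive failures, i.e. the largest t ∈ {0,1,…,n} such that X_1,…,X_t all fail. Then E[∑_{i=1}^{t} A_i] ≤ B. -/
open MeasureTheory

private lemma key_real (B : ℝ) (hB : 0 < B) :
    ∀ (n : ℕ) (A q : ℕ → ℝ), (∀ i, 0 ≤ A i) → (∀ i, 0 ≤ q i) →
      (∀ i, q i ≤ 1 - min (A i / B) 1) →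
      ∑ i ∈ Finset.range n, A i * ∏ j ∈ Finset.range (i + 1), q j ≤ B := by
  intro n
  induction n with
  | zero => intro A q _ _ _; simpa using hB.le
  | succ m ih =>
    intro A q hA hq hqb
    have hS := ih (fun i => A (i + 1)) (fun i => q (i + 1))
      (fun i => hA _) (fun i => hq _) (fun i => hqb _)
    have expand : ∀ i, ∏ j ∈ Finset.range (i + 1), q j
        = q 0 * ∏ j ∈ Finset.range i, q (j + 1) := by
      intro i; rw [Finset.prod_range_succ']; ring
    have hsum : ∑ i ∈ Finset.range (m + 1), A i * ∏ j ∈ Finset.range (i + 1), q j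
        = q 0 * (A 0 + ∑ i ∈ Finset.range m, A (i + 1) * ∏ j ∈ Finset.range (i + 1), q (j + 1)) := by
      rw [Finset.sum_range_succ']
      simp only [expand, Finset.prod_range_zero, mul_one]
      rw [mul_add, Finset.mul_sum, add_comm]
      congr 1
      · ring
      · exact Finset.sum_congr rfl fun i _ => by ring
    rw [hsum]
    have h1 : q 0 * (A 0 + ∑ i ∈ Finset.range m,
        A (i + 1) * ∏ j ∈ Finset.range (i + 1), q (j + 1)) ≤ q 0 * (A 0 + B) :=
      mul_le_mul_of_nonneg_left (by linarith) (hq 0)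
    refine h1.trans ?_
    rcases le_or_gt (A 0 / B) 1 with hc | hc
    · have hq0 : q 0 ≤ 1 - A 0 / B := by have := hqb 0; rwa [min_eq_left hc] at this
      have hA0 : A 0 ≤ B := by
        rw [div_le_one hB] at hc; exact hc
      have h2 : q 0 * B ≤ B - A 0 := by
        have := mul_le_mul_of_nonneg_right hq0 hB.le
        calc q 0 * B ≤ (1 - A 0 / B) * B := this
          _ = B - A 0 := by field_simp
      nlinarith [hq 0, hA 0, sq_nonneg (A 0)]
    · have hq0 : q 0 ≤ 0 := by
        have := hqb 0; rw [min_eq_right hc.le] at this; linarith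
      have : q 0 = 0 := le_antisymm hq0 (hq 0)
      rw [this]; linarith

/-- Let `X 0, …, X (n-1)` be independent Bernoulli experiments, with
`P(X i = true) = p i ≥ min(A i / B, 1)` where `B > 0` and `A i ≥ 0`. Let
`t ω` be the number of initial consecutive failures, i.e. the largest `t ≤ n` such
that `X 0, …, X (t-1)` all fail at `ω`. Then `E[∑_{i<t} A i] ≤ B`. -/
theorem sum_until_first_success_le {Ω : Type*} [MeasurableSpace Ω]
    (P : Measure Ω) [IsProbabilityMeasure P]
    (n : ℕ) (X : Fin n → Ω → Bool) (p A : Fin n → ℝ) (B : ℝ)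
    (hB : 0 < B) (hA : ∀ i, 0 ≤ A i)
    (hmeas : ∀ i, Measurable (X i))
    (hindep : ProbabilityTheory.iIndepFun X P)
    (hp : ∀ i, P {ω | X i ω = true} = ENNReal.ofReal (p i))
    (hpb : ∀ i, min (A i / B) 1 ≤ p i) :
    ∫ ω, (∑ j : Fin n,
        if (j : ℕ) < Nat.findGreatest
            (fun t => ∀ j : Fin n, (j : ℕ) < t → X j ω = false) n
        then A j else 0) ∂P ≤ B := by
  classical
  -- basic facts about p
  have hmin_nonneg : ∀ i, 0 ≤ min (A i / B) 1 :=
    fun i => le_min (div_nonneg (hA i) hB.le) zero_le_one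
  have hp_nonneg : ∀ i, 0 ≤ p i := fun i => (hmin_nonneg i).trans (hpb i)
  have hp_le_one : ∀ i, p i ≤ 1 := by
    intro i
    have h1 : P {ω | X i ω = true} ≤ 1 := prob_le_one
    rw [hp i] at h1
    exact_mod_cast (ENNReal.ofReal_le_one).mp h1
  -- the events
  set E : Fin n → Set Ω := fun j => ⋂ k ∈ Finset.Iic j, X k ⁻¹' {false} with hE
  have hEmeas : ∀ j, MeasurableSet (E j) := by
    intro j
    exact MeasurableSet.biInter (Finset.Iic j).countable_toSet
      (fun k _ => (hmeas k) (measurableSet_singleton false))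
  -- the condition in the integrand is membership in E j
  have hiff : ∀ (ω : Ω) (j : Fin n),
      ((j : ℕ) < Nat.findGreatest
        (fun t => ∀ k : Fin n, (k : ℕ) < t → X k ω = false) n) ↔ ω ∈ E j := by
    intro ω j
    simp only [hE, Set.mem_iInter, Set.mem_preimage, Set.mem_singleton_iff, Finset.mem_Iic]
    constructor
    · intro h k hk
      have hP0 : ∀ k : Fin n, (k : ℕ) < 0 → X k ω = false := fun k hk => absurd hk (Nat.not_lt_zero _)
      have hspec := Nat.findGreatest_spec
        (P := fun t => ∀ k : Fin n, (k : ℕ) < t → X k ω = false) (Nat.zero_le n) hP0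
      exact hspec k (lt_of_le_of_lt (Fin.le_iff_val_le_val.mp hk) h)
    · intro h
      have hPj : ∀ k : Fin n, (k : ℕ) < (j : ℕ) + 1 → X k ω = false := by
        intro k hk
        exact h k (Fin.le_def.mpr (Nat.lt_succ_iff.mp hk))
      have := Nat.le_findGreatest
        (P := fun t => ∀ k : Fin n, (k : ℕ) < t → X k ω = false)
        (Nat.succ_le_of_lt j.isLt) hPj
      omega
  -- rewrite integrand
  have hint_eq : ∀ ω, (∑ j : Fin n,
      if (j : ℕ) < Nat.findGreatest
          (fun t => ∀ j : Fin n, (j : ℕ) < t → X j ω = false) n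
      then A j else 0) = ∑ j : Fin n, (E j).indicator (fun _ => A j) ω := by
    intro ω
    refine Finset.sum_congr rfl fun j _ => ?_
    rw [Set.indicator_apply]
    simp only [hiff ω j]
  simp only [hint_eq]
  rw [integral_finset_sum _ (fun j _ =>
    (integrable_const (A j)).indicator (hEmeas j))]
  simp only [integral_indicator_const _ (hEmeas _)]
  -- compute the probabilities via independence
  have hmeasE : ∀ j : Fin n, P (E j) = ∏ k ∈ Finset.Iic j, P (X k ⁻¹' {false}) := by
    intro j
    exact hindep.measure_inter_preimage_eq_mul (Finset.Iic j)
      (sets := fun _ => {false}) (fun i _ => measurableSet_singleton false)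
  set q : Fin n → ℝ := fun k => (P (X k ⁻¹' {false})).toReal with hq
  have hq_eq : ∀ k, q k = 1 - p k := by
    intro k
    have htrue : X k ⁻¹' {true} = {ω | X k ω = true} := rfl
    have hcompl : X k ⁻¹' {false} = (X k ⁻¹' {true})ᶜ := by
      ext ω; simp [Bool.not_eq_true]
    have hPfalse : P (X k ⁻¹' {false}) = 1 - ENNReal.ofReal (p k) := by
      rw [hcompl, prob_compl_eq_one_sub ((hmeas k) (measurableSet_singleton true)), htrue, hp k]
    show (P (X k ⁻¹' {false})).toReal = 1 - p k
    rw [hPfalse, ENNReal.toReal_sub_of_le (by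
        rw [← hp k]; exact prob_le_one) (by simp),
      ENNReal.toReal_one, ENNReal.toReal_ofReal (hp_nonneg k)]
  have hPtoReal : ∀ j : Fin n, (P (E j)).toReal = ∏ k ∈ Finset.Iic j, q k := by
    intro j
    rw [hmeasE j, ENNReal.toReal_prod]
  simp only [smul_eq_mul, measureReal_def, hPtoReal]
  -- transfer to a sum over ℕ
  set A' : ℕ → ℝ := fun i => if h : i < n then A ⟨i, h⟩ else 0 with hA'
  set q' : ℕ → ℝ := fun i => if h : i < n then q ⟨i, h⟩ else 0 with hq'
  have hprod : ∀ j : Fin n, ∏ k ∈ Finset.Iic j, q k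
      = ∏ i ∈ Finset.range ((j : ℕ) + 1), q' i := by
    intro j
    have hmap : (Finset.Iic j).map Fin.valEmbedding = Finset.Iic (j : ℕ) := by
      ext i
      simp only [Finset.mem_map, Finset.mem_Iic, Fin.valEmbedding_apply]
      constructor
      · rintro ⟨k, hk, rfl⟩; exact Fin.le_def.mp hk
      · intro hi
        exact ⟨⟨i, lt_of_le_of_lt hi j.isLt⟩, Fin.le_def.mpr hi, rfl⟩
    have hIic : Finset.Iic ((j : ℕ)) = Finset.range ((j : ℕ) + 1) := by
      ext i; simp [Nat.lt_succ_iff]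
    rw [← hIic, ← hmap, Finset.prod_map]
    refine Finset.prod_congr rfl fun k hk => ?_
    simp only [hq', Fin.valEmbedding_apply, dif_pos k.isLt]
  have hsum_eq : ∑ j : Fin n, (∏ k ∈ Finset.Iic j, q k) * A j
      = ∑ i ∈ Finset.range n, A' i * ∏ k ∈ Finset.range (i + 1), q' k := by
    rw [Finset.sum_range fun i => A' i * ∏ k ∈ Finset.range (i + 1), q' k]
    refine Finset.sum_congr rfl fun j _ => ?_
    rw [hprod j]
    simp only [hA', dif_pos j.isLt, Fin.eta]
    ring
  rw [hsum_eq]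
  -- apply the key real lemma
  refine key_real B hB n A' q' ?_ ?_ ?_
  · intro i; simp only [hA']; split
    · exact hA _
    · exact le_rfl
  · intro i
    simp only [hq']; split
    · exact ENNReal.toReal_nonneg
    · exact le_rfl
  · intro i
    simp only [hA', hq']
    split
    · rename_i h
      rw [hq_eq]
      have := hpb ⟨i, h⟩
      linarith
    · simp [hB.le]
end

section
/- No online clustering algorithm with 2 clusters has a bounded competitive ratio for the 2-means objective, even for points on the real line: for every online assignment rule a (a function assigning to each nonempty finite sequence (v_1,…,v_t) of reals a label a(v_1,…,v_t) ∈ {1,2}, interpreted as the cluster of v_t given the prefix) and every M > 0, there exists a sequence v_1,…,v_n of at most 3 reals such that cost_a(v_1,…,v_n) > M · W*, where W* is the optimal 2-means cost of {v_1,…,v_n}. -/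
/-- The cost of the online assignment rule `a` on the input sequence `v`:
the label of `v i` is `a` applied to the prefix `(v 0, …, v i)`, the induced clusters
are the fibers of the labels, and each cluster pays the minimum over real centers of
the sum of squared distances of its points to the center. -/
noncomputable def onlineCost (a : List ℝ → Fin 2) {n : ℕ} (v : Fin n → ℝ) : ℝ :=
  ∑ j : Fin 2, sInf {w | ∃ c : ℝ,
    w = ∑ i ∈ Finset.univ.filter
        (fun i : Fin n => a ((List.ofFn v).take ((i : ℕ) + 1)) = j),
      (v i - c) ^ 2}

/-- The optimal 2-means cost of the multiset `v 0, …, v (n-1)` of reals. -/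
noncomputable def optTwoMeans {n : ℕ} (v : Fin n → ℝ) : ℝ :=
  sInf {w | ∃ (σ : Fin n → Fin 2) (c : Fin 2 → ℝ),
    w = ∑ i, (v i - c (σ i)) ^ 2}

abbrev OSet (a : List ℝ → Fin 2) {n : ℕ} (v : Fin n → ℝ) (j : Fin 2) : Set ℝ :=
  {w | ∃ c : ℝ,
    w = ∑ i ∈ Finset.univ.filter
        (fun i : Fin n => a ((List.ofFn v).take ((i : ℕ) + 1)) = j),
      (v i - c) ^ 2}

lemma OSet_nonneg (a : List ℝ → Fin 2) {n : ℕ} (v : Fin n → ℝ) (j : Fin 2) :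
    ∀ w ∈ OSet a v j, (0:ℝ) ≤ w := by
  rintro w ⟨c, rfl⟩; positivity

lemma OSet_nonempty (a : List ℝ → Fin 2) {n : ℕ} (v : Fin n → ℝ) (j : Fin 2) :
    (OSet a v j).Nonempty := ⟨_, 0, rfl⟩

lemma sInf_OSet_nonneg (a : List ℝ → Fin 2) {n : ℕ} (v : Fin n → ℝ) (j : Fin 2) :
    0 ≤ sInf (OSet a v j) :=
  le_csInf (OSet_nonempty a v j) (OSet_nonneg a v j)

lemma onlineCost_ge (a : List ℝ → Fin 2) {n : ℕ} (v : Fin n → ℝ) (j : Fin 2) :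
    sInf (OSet a v j) ≤ onlineCost a v := by
  unfold onlineCost
  exact Finset.single_le_sum (f := fun j => sInf (OSet a v j))
    (fun i _ => sInf_OSet_nonneg a v i) (Finset.mem_univ j)

/-- No online clustering algorithm with 2 clusters has a bounded
competitive ratio for the 2-means objective, even on the real line: for every online
assignment rule `a` and every `M > 0` there is a sequence of at most 3 reals on which
the online cost exceeds `M` times the optimal 2-means cost. -/
theorem online_two_means_unbounded_ratio (a : List ℝ → Fin 2) (M : ℝ) (hM : 0 < M) :
    ∃ (n : ℕ) (v : Fin n → ℝ), n ≤ 3 ∧ M * optTwoMeans v < onlineCost a v := by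
  by_cases h : a [(0:ℝ)] = a [(0:ℝ), 1]
  · refine ⟨2, ![0, 1], by norm_num, ?_⟩
    have hopt : optTwoMeans ![(0:ℝ), 1] = 0 := by
      unfold optTwoMeans
      apply le_antisymm
      · apply csInf_le ⟨0, by rintro w ⟨σ, c, rfl⟩; positivity⟩
        refine ⟨id, ![0, 1], ?_⟩
        simp [Fin.sum_univ_two]
      · exact le_csInf ⟨_, id, ![0,1], rfl⟩ (by rintro w ⟨σ, c, rfl⟩; positivity)
    have honl : (1:ℝ)/2 ≤ onlineCost a ![(0:ℝ), 1] := by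
      refine le_trans ?_ (onlineCost_ge a ![(0:ℝ),1] (a [(0:ℝ)]))
      apply le_csInf (OSet_nonempty _ _ _)
      rintro w ⟨c, rfl⟩
      rw [Finset.sum_filter, Fin.sum_univ_two]
      simp only [Matrix.cons_val_zero, Matrix.cons_val_one, Matrix.head_cons,
        List.ofFn_succ, List.ofFn_zero, Fin.val_zero, Fin.val_one]
      norm_num
      rw [if_pos h.symm]
      nlinarith [sq_nonneg (1 - 2*c)]
    rw [hopt]
    linarith
  · obtain ⟨T, hTge, hT1⟩ : ∃ T : ℝ, 1 ≤ T ∧ (T - 1) ^ 2 = M + 1 := by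
      refine ⟨1 + Real.sqrt (M + 1), by linarith [Real.sqrt_nonneg (M + 1)], ?_⟩
      have : 1 + Real.sqrt (M + 1) - 1 = Real.sqrt (M + 1) := by ring
      rw [this, Real.sq_sqrt (by linarith)]
    refine ⟨3, ![0, 1, T], le_refl 3, ?_⟩
    have hopt : optTwoMeans ![(0:ℝ), 1, T] ≤ 1/2 := by
      unfold optTwoMeans
      apply csInf_le ⟨0, by rintro w ⟨σ, c, rfl⟩; positivity⟩
      refine ⟨![0, 0, 1], ![1/2, T], ?_⟩
      simp [Fin.sum_univ_three]
      norm_num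
    set l2 := a [(0:ℝ), 1, T] with hl2
    have hcase : l2 = a [(0:ℝ)] ∨ l2 = a [(0:ℝ), 1] := by
      have key : ∀ x y z : Fin 2, x ≠ y → z = x ∨ z = y := by decide
      exact key _ _ _ h
    have hpre : ∀ w ∈ OSet a ![(0:ℝ), 1, T] l2, (T - 1)^2 / 2 ≤ w := by
      rintro w ⟨c, rfl⟩
      rw [Finset.sum_filter, Fin.sum_univ_three]
      simp only [Matrix.cons_val_zero, Matrix.cons_val_one, Matrix.head_cons,
        List.ofFn_succ, List.ofFn_zero, Fin.val_zero, Fin.val_one, Fin.val_two,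
        Matrix.cons_val_two, Matrix.tail_cons]
      norm_num
      rw [show ![(0:ℝ), 1, T] 2 = T from rfl, if_pos hl2.symm]
      rcases hcase with hc | hc
      · rw [if_pos hc.symm, if_neg (fun hh => h (hh.trans hc).symm)]
        nlinarith [sq_nonneg (T - 2*c), sq_nonneg c]
      · rw [if_neg (fun hh => h (hh.trans hc)), if_pos hc.symm]
        nlinarith [sq_nonneg (T + 1 - 2*c)]
    have honl : (T - 1)^2 / 2 ≤ onlineCost a ![(0:ℝ), 1, T] :=
      le_trans (le_csInf (OSet_nonempty _ _ _) hpre) (onlineCost_ge a _ l2)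
    calc M * optTwoMeans ![(0:ℝ), 1, T] ≤ M * (1/2) := by
          apply mul_le_mul_of_nonneg_left hopt hM.le
      _ < (M + 1)/2 := by linarith
      _ ≤ onlineCost a ![(0:ℝ), 1, T] := by rw [← hT1]; exact honl
end
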